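/- For all nonnegative integers n and r, the r-partial deranged Bell numbers satisfy w̃_{n,r} = ∑_{k=r}^{n} C(n,k)·{k brace r}·w̃_{n-k}, where C(n,k) is the binomial coefficient. -/

import Mathlib

/-- Stirling numbers of the second kind. -/
def stirling2 : ℕ → ℕ → ℕ
  | 0, 0 => 1
  | 0, _ + 1 => 0
  | _ + 1, 0 => 0
  | n + 1, k + 1 => (k + 1) * stirling2 n (k + 1) + stirling2 n k

lemma stirling2_of_lt : ∀ {n k : ℕ}, n < k → stirling2 n k = 0
  | 0, _+1, _ => rfl
  | n+1, k+1, h => by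
    simp [stirling2, stirling2_of_lt (by omega : n < k+1), stirling2_of_lt (by omega : n < k)]

lemma key_r0 (n s : ℕ) :
    ∑ j ∈ Finset.range (n+1), n.choose j * stirling2 j 0 * stirling2 (n-j) s
      = stirling2 n s := by
  rw [Finset.sum_eq_single 0]
  · simp [stirling2]
  · intro j hj hj0
    obtain ⟨j', rfl⟩ := Nat.exists_eq_succ_of_ne_zero hj0
    simp [stirling2]
  · simp

lemma key_s0 (n r : ℕ) :
    ∑ j ∈ Finset.range (n+1), n.choose j * stirling2 j r * stirling2 (n-j) 0
      = stirling2 n r := by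
  rw [Finset.sum_eq_single n]
  · simp [stirling2]
  · intro j hj hjn
    have hlt : j < n := by simp at hj; omega
    obtain ⟨m, hm⟩ : ∃ m, n - j = m + 1 := ⟨n - j - 1, by omega⟩
    rw [hm]
    simp [stirling2]
  · simp

lemma keyA : ∀ (n r s : ℕ),
    stirling2 n (r+s) * (r+s).choose r
      = ∑ j ∈ Finset.range (n+1), n.choose j * stirling2 j r * stirling2 (n-j) s := by
  intro n
  induction n with
  | zero =>
    intro r s
    match r, s with
    | 0, 0 => simp [stirling2]
    | 0, s+1 => simp [stirling2]
    | r+1, 0 => simp [stirling2]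
    | r+1, s+1 =>
      rw [stirling2_of_lt (by omega)]
      simp [stirling2]
  | succ n ih =>
    intro r s
    match r, s with
    | 0, s =>
      rw [Nat.zero_add, Nat.choose_zero_right, Nat.mul_one, key_r0]
    | r+1, 0 =>
      rw [Nat.add_zero, Nat.choose_self, Nat.mul_one, key_s0]
    | r+1, s+1 =>
      -- RHS: drop j = 0 term
      rw [Finset.sum_range_succ']
      simp only [Nat.choose_zero_right, Nat.sub_zero, show stirling2 0 (r+1) = 0 from rfl,
        Nat.mul_zero, Nat.zero_mul, Nat.mul_one, Nat.add_zero, Nat.succ_sub_succ]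
      -- Pascal on choose
      have pascal : ∀ j, (n+1).choose (j+1) = n.choose j + n.choose (j+1) :=
        fun j => Nat.choose_succ_succ n j
      rw [show ∑ j ∈ Finset.range (n+1), (n+1).choose (j+1) * stirling2 (j+1) (r+1) * stirling2 (n-j) (s+1)
          = ∑ j ∈ Finset.range (n+1), n.choose j * stirling2 (j+1) (r+1) * stirling2 (n-j) (s+1)
            + ∑ j ∈ Finset.range (n+1), n.choose (j+1) * stirling2 (j+1) (r+1) * stirling2 (n-j) (s+1) by
        rw [← Finset.sum_add_distrib]
        exact Finset.sum_congr rfl fun j _ => by rw [pascal]; ring]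
      -- Sum1
      have h1 : ∑ j ∈ Finset.range (n+1), n.choose j * stirling2 (j+1) (r+1) * stirling2 (n-j) (s+1)
          = (r+1) * (stirling2 n (r+1+(s+1)) * (r+1+(s+1)).choose (r+1))
            + stirling2 n (r+(s+1)) * (r+(s+1)).choose r := by
        have expand : ∀ j, stirling2 (j+1) (r+1) = (r+1) * stirling2 j (r+1) + stirling2 j r :=
          fun j => rfl
        calc ∑ j ∈ Finset.range (n+1), n.choose j * stirling2 (j+1) (r+1) * stirling2 (n-j) (s+1)
            = ∑ j ∈ Finset.range (n+1), ((r+1) * (n.choose j * stirling2 j (r+1) * stirling2 (n-j) (s+1))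
                + n.choose j * stirling2 j r * stirling2 (n-j) (s+1)) := by
              refine Finset.sum_congr rfl fun j _ => ?_
              rw [expand]; ring
          _ = (r+1) * ∑ j ∈ Finset.range (n+1), n.choose j * stirling2 j (r+1) * stirling2 (n-j) (s+1)
                + ∑ j ∈ Finset.range (n+1), n.choose j * stirling2 j r * stirling2 (n-j) (s+1) := by
              rw [Finset.sum_add_distrib, Finset.mul_sum]
          _ = _ := by rw [← ih (r+1) (s+1), ← ih r (s+1)]
      -- Sum2
      have h2 : ∑ j ∈ Finset.range (n+1), n.choose (j+1) * stirling2 (j+1) (r+1) * stirling2 (n-j) (s+1)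
          = (s+1) * (stirling2 n (r+1+(s+1)) * (r+1+(s+1)).choose (r+1))
            + stirling2 n (r+1+s) * (r+1+s).choose (r+1) := by
        have hshift : ∑ j ∈ Finset.range (n+1), n.choose (j+1) * stirling2 (j+1) (r+1) * stirling2 (n-j) (s+1)
            = ∑ i ∈ Finset.range (n+1), n.choose i * stirling2 i (r+1) * stirling2 (n+1-i) (s+1) := by
          have e1 := Finset.sum_range_succ' (fun i => n.choose i * stirling2 i (r+1) * stirling2 (n+1-i) (s+1)) (n+1)
          have e2 := Finset.sum_range_succ (fun i => n.choose i * stirling2 i (r+1) * stirling2 (n+1-i) (s+1)) (n+1)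
          simp only [show stirling2 0 (r+1) = 0 from rfl, Nat.mul_zero, Nat.zero_mul,
            Nat.add_zero, Nat.choose_succ_self, Nat.zero_mul] at e1 e2
          rw [← e2, e1]
          refine Finset.sum_congr rfl fun j hj => ?_
          rw [Nat.succ_sub_succ]
        rw [hshift]
        have expand : ∀ i ∈ Finset.range (n+1),
            n.choose i * stirling2 i (r+1) * stirling2 (n+1-i) (s+1)
            = (s+1) * (n.choose i * stirling2 i (r+1) * stirling2 (n-i) (s+1))
              + n.choose i * stirling2 i (r+1) * stirling2 (n-i) s := by
          intro i hi
          have hle : i ≤ n := by simp at hi; omega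
          rw [show n+1-i = (n-i)+1 by omega,
            show stirling2 ((n-i)+1) (s+1) = (s+1) * stirling2 (n-i) (s+1) + stirling2 (n-i) s from rfl]
          ring
        rw [Finset.sum_congr rfl expand, Finset.sum_add_distrib, ← Finset.mul_sum,
          ← ih (r+1) (s+1), ← ih (r+1) s]
      rw [h1, h2]
      have hL : stirling2 (n+1) (r+1+(s+1)) = (r+s+2) * stirling2 n (r+s+2) + stirling2 n (r+s+1) := by
        rw [show r+1+(s+1) = (r+s+1)+1 by ring]; rfl
      rw [hL]
      simp only [show r+1+(s+1) = r+s+2 from by ring, show r+1+s = r+s+1 from by ring,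
        show r+(s+1) = r+s+1 from by ring]
      have hC : (r+s+1).choose r + (r+s+1).choose (r+1) = (r+s+2).choose (r+1) :=
        (Nat.choose_succ_succ (r+s+1) r).symm
      rw [← hC]
      ring

/-- Derangement numbers `d_n = n! ∑_{i=0}^n (-1)^i / i!`. -/
def derang (n : ℕ) : ℚ :=
  (n.factorial : ℚ) * ∑ i ∈ Finset.range (n + 1), (-1 : ℚ) ^ i / (i.factorial : ℚ)

/-- Partial derangement numbers `d_{n,r}`. -/
def pderang (n r : ℕ) : ℚ :=
  if r ≤ n then (n.choose r : ℚ) * derang (n - r) else 0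

/-- Partial deranged Bell numbers `w̃_{n,r}`. -/
def pdb (n r : ℕ) : ℚ :=
  ∑ k ∈ Finset.range (n + 1), (stirling2 n k : ℚ) * pderang k r

lemma pdb_zero (m : ℕ) : pdb m 0 = ∑ k ∈ Finset.range (m+1), (stirling2 m k : ℚ) * derang k := by
  unfold pdb pderang
  exact Finset.sum_congr rfl fun k _ => by simp

/-- `w̃_{n,r} = ∑_{k=r}^n C(n,k) {k brace r} w̃_{n-k}`, where `w̃_m = w̃_{m,0}`. -/
theorem pdb_eq_sum_choose_stirling_mul_pdb_zero (n r : ℕ) :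
    pdb n r = ∑ k ∈ Finset.Icc r n, (n.choose k : ℚ) * (stirling2 k r : ℚ) * pdb (n - k) 0 := by
  by_cases hrn : r ≤ n
  case neg =>
    rw [Finset.Icc_eq_empty (by omega), Finset.sum_empty]
    unfold pdb pderang
    refine Finset.sum_eq_zero fun k hk => ?_
    simp only [Finset.mem_range] at hk
    rw [if_neg (by omega)]
    ring
  case pos =>
  have hfilter : (Finset.range (n+1)).filter (fun k => r ≤ k) = Finset.Icc r n := by
    ext k; simp [Nat.lt_succ_iff]; omega
  have step1 : pdb n r = ∑ k ∈ Finset.Icc r n,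
      ((stirling2 n k * k.choose r : ℕ) : ℚ) * derang (k - r) := by
    unfold pdb pderang
    rw [← hfilter, Finset.sum_filter]
    refine Finset.sum_congr rfl fun k _ => ?_
    by_cases h : r ≤ k
    · rw [if_pos h, if_pos h]; push_cast; ring
    · rw [if_neg h, if_neg h]; ring
  rw [step1]
  have step2 : ∀ k ∈ Finset.Icc r n,
      ((stirling2 n k * k.choose r : ℕ) : ℚ) * derang (k - r)
      = ∑ j ∈ Finset.range (n+1),
          (n.choose j : ℚ) * (stirling2 j r : ℚ) * ((stirling2 (n-j) (k-r) : ℚ) * derang (k-r)) := by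
    intro k hk
    simp only [Finset.mem_Icc] at hk
    have hA := keyA n r (k - r)
    rw [show r + (k - r) = k by omega] at hA
    rw [hA]
    push_cast
    rw [Finset.sum_mul]
    exact Finset.sum_congr rfl fun j _ => by ring
  rw [Finset.sum_congr rfl step2, Finset.sum_comm]
  -- restrict j to Icc r n
  have step3 : ∑ j ∈ Finset.range (n+1), ∑ k ∈ Finset.Icc r n,
      (n.choose j : ℚ) * (stirling2 j r : ℚ) * ((stirling2 (n-j) (k-r) : ℚ) * derang (k-r))
      = ∑ j ∈ Finset.Icc r n, ∑ k ∈ Finset.Icc r n,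
      (n.choose j : ℚ) * (stirling2 j r : ℚ) * ((stirling2 (n-j) (k-r) : ℚ) * derang (k-r)) := by
    symm
    refine Finset.sum_subset (fun j hj => ?_) (fun j hj hj2 => ?_)
    · simp only [Finset.mem_Icc] at hj; simp [Nat.lt_succ_iff]; omega
    · simp only [Finset.mem_range, Finset.mem_Icc] at hj hj2
      refine Finset.sum_eq_zero fun k hk => ?_
      rw [stirling2_of_lt (show j < r by omega)]
      push_cast; ring
  rw [step3]
  refine Finset.sum_congr rfl fun j hj => ?_
  simp only [Finset.mem_Icc] at hj
  -- inner sum equals pdb (n-j) 0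
  have inner : ∑ k ∈ Finset.Icc r n, (stirling2 (n-j) (k-r) : ℚ) * derang (k-r)
      = pdb (n-j) 0 := by
    rw [pdb_zero]
    rw [show Finset.Icc r n = Finset.image (fun m => r + m) (Finset.range (n - r + 1)) by
      ext k; simp [Finset.mem_image, Nat.lt_succ_iff]; constructor
      · intro h; exact ⟨k - r, by omega, by omega⟩
      · rintro ⟨m, hm, rfl⟩; omega]
    rw [Finset.sum_image (by intro a _ b _ h; simp only at h; omega)]
    simp only [Nat.add_sub_cancel_left]
    symm
    refine Finset.sum_subset (fun m hm => ?_) (fun m hm hm2 => ?_)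
    · simp only [Finset.mem_range] at *; omega
    · simp only [Finset.mem_range] at hm hm2
      rw [stirling2_of_lt (show n - j < m by omega)]
      push_cast; ring
  rw [← inner, Finset.mul_sum]
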